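/- Let T, S : H₁ → H₂ be bounded linear operators with T injective and R(T) closed, and suppose R(S) ⊆ R(T) and ‖T† S‖ < 1. Then (1) T + S is injective; (2) R(T + S) = R(T); (3) the Moore–Penrose inverse of T + S satisfies (T + S)† = (I + T†S)⁻¹ T† = T† (I + S T†)⁻¹; (4) ‖(T + S)†‖ ≤ ‖T†‖ / (1 − ‖T†S‖); and (5) ‖(T + S)† − T†‖ ≤ ‖T†S‖ ‖T†‖ / (1 − ‖T†S‖). -/

import Mathlib

/-- `Td` is the Moore–Penrose inverse of the bounded operator `T` with closed range:
`T T† = P_{R(T)}`, `T† T = P_{N(T)^⊥}` and `N(T†) = R(T)^⊥` (the projection identities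
are expressed via the characteristic orthogonality properties of orthogonal
projections onto closed subspaces). -/
structure IsMPBOf {H₁ H₂ : Type*} [NormedAddCommGroup H₁] [InnerProductSpace ℂ H₁]
    [NormedAddCommGroup H₂] [InnerProductSpace ℂ H₂]
    (T : H₁ →L[ℂ] H₂) (Td : H₂ →L[ℂ] H₁) : Prop where
  mem_carrier : ∀ y : H₂, Td y ∈ (LinearMap.ker (T : H₁ →ₗ[ℂ] H₂))ᗮ
  proj_ran : ∀ y : H₂, y - T (Td y) ∈ (LinearMap.range (T : H₁ →ₗ[ℂ] H₂))ᗮ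
  proj_ker : ∀ x : H₁, x - Td (T x) ∈ LinearMap.ker (T : H₁ →ₗ[ℂ] H₂)
  ker_eq : ∀ y : H₂, Td y = 0 ↔ y ∈ (LinearMap.range (T : H₁ →ₗ[ℂ] H₂))ᗮ

/-- Corollary 3.10 (Ding–Huang, Lemma 3.3): if `T` is bounded, injective with closed
range, `R(S) ⊆ R(T)` and `‖T† S‖ < 1`, then `T + S` is injective, `R(T + S) = R(T)`,
`(T + S)† = (I + T† S)⁻¹ T† = T† (I + S T†)⁻¹`, `‖(T + S)†‖ ≤ ‖T†‖/(1 − ‖T† S‖)` and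
`‖(T + S)† − T†‖ ≤ ‖T† S‖ ‖T†‖/(1 − ‖T† S‖)`. -/
theorem stmt8 {H₁ H₂ : Type*} [NormedAddCommGroup H₁] [InnerProductSpace ℂ H₁] [CompleteSpace H₁]
    [NormedAddCommGroup H₂] [InnerProductSpace ℂ H₂] [CompleteSpace H₂]
    (T S : H₁ →L[ℂ] H₂) (hinj : Function.Injective T)
    (hran : IsClosed (LinearMap.range (T : H₁ →ₗ[ℂ] H₂) : Set H₂))
    (Td : H₂ →L[ℂ] H₁) (hMP : IsMPBOf T Td)
    (hRS : LinearMap.range (S : H₁ →ₗ[ℂ] H₂) ≤ LinearMap.range (T : H₁ →ₗ[ℂ] H₂))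
    (hnorm : ‖Td.comp S‖ < 1) :
    Function.Injective (T + S) ∧
      LinearMap.range ((T + S : H₁ →L[ℂ] H₂) : H₁ →ₗ[ℂ] H₂) = LinearMap.range (T : H₁ →ₗ[ℂ] H₂) ∧
      ∃ U : H₂ →L[ℂ] H₁, IsMPBOf (T + S) U ∧
        (∃ V : H₁ →L[ℂ] H₁, V.comp (1 + Td.comp S) = 1 ∧ (1 + Td.comp S).comp V = 1 ∧
          U = V.comp Td) ∧
        (∃ W : H₂ →L[ℂ] H₂, W.comp (1 + S.comp Td) = 1 ∧ (1 + S.comp Td).comp W = 1 ∧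
          U = Td.comp W) ∧
        ‖U‖ ≤ ‖Td‖ / (1 - ‖Td.comp S‖) ∧
        ‖U - Td‖ ≤ ‖Td.comp S‖ * ‖Td‖ / (1 - ‖Td.comp S‖) := by
  -- Td ∘ T = 1
  have hTdT : ∀ x : H₁, Td (T x) = x := by
    intro x
    have h : T (x - Td (T x)) = 0 := hMP.proj_ker x
    have h2 : x - Td (T x) = 0 := hinj (by simpa using h)
    have := sub_eq_zero.mp h2
    exact this.symm
  -- T ∘ Td = id on range T
  have hTTd : ∀ y ∈ LinearMap.range (T : H₁ →ₗ[ℂ] H₂), T (Td y) = y := by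
    intro y hy
    have hmem : y - T (Td y) ∈ LinearMap.range (T : H₁ →ₗ[ℂ] H₂) := by
      exact Submodule.sub_mem _ hy ⟨Td y, rfl⟩
    have horth := hMP.proj_ran y
    have : (y - T (Td y)) = 0 := by
      have := (Submodule.mem_orthogonal _ _).mp horth _ hmem
      simpa [inner_self_eq_zero] using this
    have := sub_eq_zero.mp this
    exact this.symm
  have hTTdS : ∀ x : H₁, T (Td (S x)) = S x := fun x => hTTd (S x) (hRS ⟨x, rfl⟩)
  -- T + S = T ∘ (1 + Td ∘ S)
  have hfact : ∀ x : H₁, (T + S) x = T (x + Td (S x)) := by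
    intro x
    simp [map_add, hTTdS x]
  -- the inverse of 1 + Td∘S
  have hnormneg : ‖-(Td.comp S)‖ < 1 := by simpa using hnorm
  set u : (H₁ →L[ℂ] H₁)ˣ := Units.oneSub (-(Td.comp S)) hnormneg with hu
  have huval : (u : H₁ →L[ℂ] H₁) = 1 + Td.comp S := by
    simp [hu, Units.val_oneSub, sub_neg_eq_add]
  set V : H₁ →L[ℂ] H₁ := ↑u⁻¹ with hV
  have hVcomp : V.comp (1 + Td.comp S) = 1 := by
    rw [← ContinuousLinearMap.mul_def, ← huval, hV]
    exact u.inv_mul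
  have hcompV : (1 + Td.comp S).comp V = 1 := by
    rw [← ContinuousLinearMap.mul_def, ← huval, hV]
    exact u.mul_inv
  -- pointwise versions
  have hVc : ∀ x : H₁, V (x + Td (S x)) = x := by
    intro x
    have := congrArg (fun f : H₁ →L[ℂ] H₁ => f x) hVcomp
    simpa using this
  have hcV : ∀ x : H₁, V x + Td (S (V x)) = x := by
    intro x
    have := congrArg (fun f : H₁ →L[ℂ] H₁ => f x) hcompV
    simpa using this
  -- injectivity of T + S
  have hinj' : Function.Injective (T + S) := by
    intro x y hxy
    rw [hfact x, hfact y] at hxy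
    have h2 := hinj hxy
    calc x = V (x + Td (S x)) := (hVc x).symm
      _ = V (y + Td (S y)) := by rw [h2]
      _ = y := hVc y
  -- range equality
  have hrange : LinearMap.range ((T + S : H₁ →L[ℂ] H₂) : H₁ →ₗ[ℂ] H₂) = LinearMap.range (T : H₁ →ₗ[ℂ] H₂) := by
    apply le_antisymm
    · rintro _ ⟨x, rfl⟩
      exact ⟨x + Td (S x), (hfact x).symm⟩
    · rintro _ ⟨x, rfl⟩
      refine ⟨V x, ?_⟩
      show (T + S) (V x) = T x
      rw [hfact (V x)]
      congr 1
      exact hcV x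
  set U : H₂ →L[ℂ] H₁ := V.comp Td with hU
  have hUapp : ∀ y : H₂, U y = V (Td y) := fun y => rfl
  -- (T+S) ∘ U = T ∘ Td
  have hTSU : ∀ y : H₂, (T + S) (U y) = T (Td y) := by
    intro y
    rw [hfact (U y), hUapp]
    congr 1
    exact hcV (Td y)
  -- U ∘ (T+S) = 1
  have hUTS : ∀ x : H₁, U ((T + S) x) = x := by
    intro x
    rw [hfact x, hUapp, hTdT]
    exact hVc x
  -- the W operator
  set W : H₂ →L[ℂ] H₂ := 1 - S.comp (V.comp Td) with hW
  have hWapp : ∀ y : H₂, W y = y - S (V (Td y)) := fun y => rfl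
  have hWcomp : W.comp (1 + S.comp Td) = 1 := by
    ext y
    simp only [ContinuousLinearMap.comp_apply, ContinuousLinearMap.add_apply,
      ContinuousLinearMap.one_apply, hWapp, map_add]
    have h9 : V (Td y) + V (Td (S (Td y))) = Td y := by
      have := hVc (Td y); simpa [map_add] using this
    have h10 : S (V (Td y)) + S (V (Td (S (Td y)))) = S (Td y) := by
      rw [← map_add, h9]
    rw [h10]
    abel
  have hcompW : (1 + S.comp Td).comp W = 1 := by
    ext y
    simp only [ContinuousLinearMap.comp_apply, ContinuousLinearMap.add_apply,
      ContinuousLinearMap.one_apply, hWapp, map_sub]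
    have h4 := hcV (Td y)
    -- V (Td y) + Td (S (V (Td y))) = Td y
    have h5 : S (V (Td y)) + S (Td (S (V (Td y)))) = S (Td y) := by
      have := congrArg S h4; simpa [map_add] using this
    rw [h5]
    abel
  have hUW : U = Td.comp W := by
    ext y
    simp only [hUapp, ContinuousLinearMap.comp_apply, hWapp, map_sub]
    have h4 := hcV (Td y)
    have h5 : Td (S (V (Td y))) = Td y - V (Td y) := by
      rw [eq_sub_iff_add_eq, add_comm]; exact h4
    rw [h5]; abel
  -- MP properties of U for T + S
  have hMPU : IsMPBOf (T + S) U := by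
    constructor
    · intro y
      intro z hz
      have hz0 : z = 0 := by
        have : (T + S) z = 0 := hz
        exact hinj' (by simpa using this)
      simp [hz0]
    · intro y
      rw [hTSU y, hrange]
      exact hMP.proj_ran y
    · intro x
      have : x - U ((T + S) x) = 0 := by rw [hUTS x]; abel
      rw [this]
      exact Submodule.zero_mem _
    · intro y
      rw [hrange]
      constructor
      · intro h
        have : Td y = 0 := by
          have h1 : V (Td y) = 0 := h
          have := hcV (Td y)
          rw [h1] at this
          simpa using this.symm
        exact (hMP.ker_eq y).mp this
      · intro h
        have : Td y = 0 := (hMP.ker_eq y).mpr h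
        simp [hUapp, this]
  -- norm bound on V
  have hpos : (0:ℝ) < 1 - ‖Td.comp S‖ :=
    sub_pos.mpr hnorm
  have hVnorm : ‖V‖ ≤ (1 - ‖Td.comp S‖)⁻¹ := by
    have h1 : ‖V‖ = ‖∑' n : ℕ, (-(Td.comp S)) ^ n‖ := rfl
    have h2 := tsum_geometric_le_of_norm_lt_one (-(Td.comp S)) hnormneg
    have h3 : ‖(1 : H₁ →L[ℂ] H₁)‖ ≤ 1 := ContinuousLinearMap.norm_id_le
    rw [h1]
    have : ‖-(Td.comp S)‖ = ‖Td.comp S‖ := norm_neg _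
    rw [this] at h2
    linarith
  have hUnorm : ‖U‖ ≤ ‖Td‖ / (1 - ‖Td.comp S‖) := by
    calc ‖U‖ ≤ ‖V‖ * ‖Td‖ := ContinuousLinearMap.opNorm_comp_le V Td
      _ ≤ (1 - ‖Td.comp S‖)⁻¹ * ‖Td‖ :=
        mul_le_mul_of_nonneg_right hVnorm (norm_nonneg _)
      _ = ‖Td‖ / (1 - ‖Td.comp S‖) := by rw [div_eq_inv_mul]
  have hUsub : U - Td = -((Td.comp S).comp U) := by
    ext y
    simp only [ContinuousLinearMap.sub_apply, ContinuousLinearMap.neg_apply,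
      ContinuousLinearMap.comp_apply, hUapp]
    have h4 := hcV (Td y)
    have h5 : Td (S (V (Td y))) = Td y - V (Td y) := by
      rw [eq_sub_iff_add_eq, add_comm]; exact h4
    rw [h5]; abel
  have hUsubnorm : ‖U - Td‖ ≤ ‖Td.comp S‖ * ‖Td‖ / (1 - ‖Td.comp S‖) := by
    rw [hUsub, norm_neg]
    calc ‖(Td.comp S).comp U‖ ≤ ‖Td.comp S‖ * ‖U‖ :=
          ContinuousLinearMap.opNorm_comp_le _ _
      _ ≤ ‖Td.comp S‖ * (‖Td‖ / (1 - ‖Td.comp S‖)) :=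
          mul_le_mul_of_nonneg_left hUnorm (norm_nonneg _)
      _ = ‖Td.comp S‖ * ‖Td‖ / (1 - ‖Td.comp S‖) := by ring
  exact ⟨hinj', hrange, U, hMPU, ⟨V, hVcomp, hcompV, rfl⟩,
    ⟨W, hWcomp, hcompW, hUW⟩, hUnorm, hUsubnorm⟩
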